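/- Let s and r be two nodes, each with node-selection probabilities, values γ, endpoints L and payoffs u defined as in the context, and let i ∈ {1,…,n−1}. (i) If u_{s,i} ≥ u_{r,i}, γ_{s,i} ≤ γ_{r,i} and α_{r,i} < α_{s,i}, then u_{s,i+1} > u_{r,i+1}. (ii) If u_{s,i} ≥ u_{r,i}, γ_{s,i} < γ_{r,i} and α_{s,i} ≥ α_{r,i}, then u_{s,i+1} > u_{r,i+1}. -/

import Mathlib

/-- Probability of at least `m` successes in `l-1` Bernoulli(x) trials. -/
noncomputable def w (l m : ℕ) (x : ℝ) : ℝ :=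
  ∑ i ∈ Finset.Icc m (l - 1), ((l - 1).choose i : ℝ) * x ^ i * (1 - x) ^ (l - 1 - i)

/-- `W x = 1 - w x`. -/
noncomputable def W (l m : ℕ) (x : ℝ) : ℝ := 1 - w l m x

/-- `γ_{a,i} = ∑_{j=i}^n α_{a,j}` for a node with selection probabilities `α`. -/
noncomputable def gamN (n : ℕ) (α : ℕ → ℝ) (i : ℕ) : ℝ :=
  ∑ j ∈ Finset.Icc i n, α j

/-- The maximum expected payoff `u_{a,i} = (f_i(L_{a,i-1}) - c) · W(γ_{a,i})` at state `i`
for a node with selection probabilities `α` and lower endpoints `L`. -/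
noncomputable def payoff (l m n : ℕ) (c : ℝ) (f : ℕ → ℝ → ℝ)
    (α : ℕ → ℝ) (L : ℕ → ℝ) (i : ℕ) : ℝ :=
  (f i (L (i - 1)) - c) * W l m (gamN n α i)

open Finset

lemma sum_binom (N : ℕ) (x : ℝ) :
    ∑ i ∈ range (N+1), (N.choose i : ℝ) * x ^ i * (1 - x) ^ (N - i) = 1 := by
  have h := add_pow x (1 - x) N
  simp only [add_sub_cancel, one_pow] at h
  have : ∑ i ∈ range (N+1), (N.choose i : ℝ) * x ^ i * (1 - x) ^ (N - i)
      = ∑ i ∈ range (N+1), x ^ i * (1 - x) ^ (N - i) * (N.choose i : ℝ) := by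
    apply Finset.sum_congr rfl; intro i hi; ring
  rw [this, ← h]

lemma W_pos (l m : ℕ) (hm : 1 ≤ m) (hml : m ≤ l - 1) {x : ℝ} (hx0 : 0 ≤ x) (hx1 : x < 1) :
    0 < W l m x := by
  set N := l - 1 with hN
  have hsplit : ∑ i ∈ Ico 0 m, (N.choose i : ℝ) * x ^ i * (1 - x) ^ (N - i)
      + ∑ i ∈ Ico m (N+1), (N.choose i : ℝ) * x ^ i * (1 - x) ^ (N - i)
      = ∑ i ∈ Ico 0 (N+1), (N.choose i : ℝ) * x ^ i * (1 - x) ^ (N - i) :=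
    Finset.sum_Ico_consecutive _ (Nat.zero_le m) (by omega)
  have h1 : ∑ i ∈ Ico 0 (N+1), (N.choose i : ℝ) * x ^ i * (1 - x) ^ (N - i) = 1 := by
    rw [← Finset.range_eq_Ico]; exact sum_binom N x
  have h2 : w l m x = ∑ i ∈ Ico m (N+1), (N.choose i : ℝ) * x ^ i * (1 - x) ^ (N - i) := by
    rw [w, Finset.Ico_add_one_right_eq_Icc]
  have hW : W l m x = ∑ i ∈ Ico 0 m, (N.choose i : ℝ) * x ^ i * (1 - x) ^ (N - i) := by
    rw [W, h2]; linarith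
  rw [hW]
  have hx1' : (0:ℝ) < 1 - x := by linarith
  have h0mem : 0 ∈ Ico 0 m := by simp; omega
  have hterm : (0:ℝ) < (N.choose 0 : ℝ) * x ^ 0 * (1 - x) ^ (N - 0) := by
    simp only [Nat.choose_zero_right, Nat.cast_one, pow_zero, one_mul, Nat.sub_zero]
    exact pow_pos hx1' N
  calc (0:ℝ) < (N.choose 0 : ℝ) * x ^ 0 * (1 - x) ^ (N - 0) := hterm
    _ ≤ _ := Finset.single_le_sum (f := fun j => (N.choose j : ℝ) * x ^ j * (1 - x) ^ (N - j)) (fun j _ => by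
        have h1 := pow_nonneg hx0 j
        have h2 := pow_nonneg hx1'.le (N - j)
        positivity) h0mem

lemma w_hasDerivAt (l m : ℕ) (hm : 1 ≤ m) (hml : m ≤ l - 1) (x : ℝ) :
    HasDerivAt (w l m)
      ((m : ℝ) * ((l-1).choose m : ℝ) * x ^ (m-1) * (1-x) ^ (l-1-m)) x := by
  set N := l - 1 with hN
  set b : ℕ → ℝ := fun i => (i : ℝ) * (N.choose i : ℝ) * x ^ (i-1) * (1-x) ^ (N-i) with hb
  have hterm : ∀ i ∈ Icc m N, HasDerivAt
      (fun y : ℝ => (N.choose i : ℝ) * y ^ i * (1 - y) ^ (N - i))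
      (b i - b (i+1)) x := by
    intro i hi
    rw [Finset.mem_Icc] at hi
    have h1 : HasDerivAt (fun y : ℝ => y ^ i) ((i:ℝ) * x ^ (i-1)) x := hasDerivAt_pow i x
    have hsub : HasDerivAt (fun y : ℝ => 1 - y) (-1) x := (hasDerivAt_id x).const_sub 1
    have h2 : HasDerivAt (fun y : ℝ => (1 - y) ^ (N - i))
        (((N-i : ℕ):ℝ) * (1-x) ^ (N-i-1) * (-1)) x :=
      (hasDerivAt_pow (N-i) (1-x)).comp x hsub
    have h3 := ((h1.const_mul ((N.choose i : ℝ))).fun_mul h2)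
    refine h3.congr_deriv (Eq.symm ?_)
    have hkey : ((N.choose (i+1) : ℝ)) * ((i+1 : ℕ) : ℝ) = (N.choose i : ℝ) * ((N - i : ℕ) : ℝ) := by
      exact_mod_cast Nat.choose_succ_right_eq N i
    simp only [hb]
    have e1 : (i+1) - 1 = i := by omega
    have e2 : N - (i+1) = N - i - 1 := by omega
    rw [e1, e2]
    linear_combination (- (x ^ i * (1 - x) ^ (N - i - 1))) * hkey
  have hsum : HasDerivAt (fun y : ℝ => ∑ i ∈ Icc m N,
      (N.choose i : ℝ) * y ^ i * (1 - y) ^ (N - i))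
      (∑ i ∈ Icc m N, (b i - b (i+1))) x := HasDerivAt.fun_sum hterm
  have htel : ∑ i ∈ Icc m N, (b i - b (i+1)) = b m - b (N+1) := by
    have key := Finset.sum_range_sub' (fun j => b (m + j)) (N - m + 1)
    have e3 : m + (N - m + 1) = N + 1 := by omega
    rw [e3] at key
    simp only [Nat.add_zero] at key
    rw [← Finset.Ico_add_one_right_eq_Icc, Finset.sum_Ico_eq_sum_range,
        show N + 1 - m = (N - m) + 1 from by omega, ← key]
    apply Finset.sum_congr rfl
    intro j _
    rw [Nat.add_assoc]
  have hbN1 : b (N+1) = 0 := by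
    simp only [hb]
    rw [Nat.choose_succ_self]
    simp
  have : HasDerivAt (w l m) (b m - b (N+1)) x := by
    rw [← htel]
    exact hsum
  rw [hbN1, sub_zero] at this
  exact this

lemma w_strictMonoOn (l m : ℕ) (hm : 1 ≤ m) (hml : m ≤ l - 1) :
    StrictMonoOn (w l m) (Set.Icc (0:ℝ) 1) := by
  apply strictMonoOn_of_deriv_pos (convex_Icc 0 1)
  · have : Continuous (w l m) := by
      unfold w
      exact continuous_finset_sum _ (fun i _ => by fun_prop)
    exact this.continuousOn
  · intro x hx
    rw [interior_Icc] at hx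
    rw [(w_hasDerivAt l m hm hml x).deriv]
    have h1 : (0:ℝ) < x ^ (m-1) := pow_pos hx.1 _
    have h2 : (0:ℝ) < (1-x) ^ (l-1-m) := pow_pos (by linarith [hx.2]) _
    have h3 : 0 < (l-1).choose m := Nat.choose_pos hml
    have h4 : (0:ℝ) < m := by exact_mod_cast hm
    have h5 : (0:ℝ) < ((l-1).choose m : ℝ) := by exact_mod_cast h3
    positivity

lemma W_lt_W (l m : ℕ) (hm : 1 ≤ m) (hml : m ≤ l - 1) {a b : ℝ}
    (ha : 0 ≤ a) (hab : a < b) (hb : b < 1) : W l m b < W l m a := by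
  have := w_strictMonoOn l m hm hml (Set.mem_Icc.2 ⟨ha, by linarith⟩)
    (Set.mem_Icc.2 ⟨by linarith, hb.le⟩) hab
  simp only [W]
  linarith

lemma gam_nonneg (n : ℕ) (α : ℕ → ℝ) (h0 : ∀ j ∈ Finset.Icc 1 n, 0 ≤ α j)
    (j : ℕ) (hj : 1 ≤ j) : 0 ≤ gamN n α j := by
  apply Finset.sum_nonneg
  intro k hk
  rw [Finset.mem_Icc] at hk
  exact h0 k (Finset.mem_Icc.2 ⟨by omega, hk.2⟩)

lemma gam_lt_one (n : ℕ) (α : ℕ → ℝ) (h0 : ∀ j ∈ Finset.Icc 1 n, 0 ≤ α j)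
    (hsum : ∑ j ∈ Finset.Icc 1 n, α j < 1) (j : ℕ) (hj : 1 ≤ j) : gamN n α j < 1 := by
  have hsub : Finset.Icc j n ⊆ Finset.Icc 1 n := Finset.Icc_subset_Icc_left hj
  have : gamN n α j ≤ ∑ k ∈ Finset.Icc 1 n, α k :=
    Finset.sum_le_sum_of_subset_of_nonneg hsub (fun k hk _ => h0 k hk)
  linarith

lemma gam_succ (n : ℕ) (α : ℕ → ℝ) (i : ℕ) (h2 : i ≤ n) :
    gamN n α i = α i + gamN n α (i+1) := by
  unfold gamN
  rw [show Finset.Icc i n = insert i (Finset.Icc (i+1) n) from by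
    ext k; simp only [Finset.mem_Icc, Finset.mem_insert]; omega]
  rw [Finset.sum_insert (by simp)]

lemma key_pos (l m n : ℕ) (hm : 1 ≤ m) (hml : m ≤ l - 1)
    (c v : ℝ) (f : ℕ → ℝ → ℝ)
    (hford : ∀ i ∈ Finset.Icc 1 n, ∀ j ∈ Finset.Icc 1 n, i < j → ∀ x : ℝ, f i x < f j x)
    (hfv : c < f 1 v)
    (α : ℕ → ℝ) (h0 : ∀ j ∈ Finset.Icc 1 n, 0 ≤ α j)
    (hsum : ∑ j ∈ Finset.Icc 1 n, α j < 1)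
    (L : ℕ → ℝ) (hL0 : L 0 = v)
    (hLrec : ∀ i ∈ Finset.Icc 1 n,
      (f i (L i) - c) * W l m (gamN n α (i + 1)) =
        (f i (L (i - 1)) - c) * W l m (gamN n α i)) :
    ∀ j, 1 ≤ j → j ≤ n → c < f j (L (j-1)) := by
  intro j hj1
  induction j, hj1 using Nat.le_induction with
  | base => intro _; simpa [hL0] using hfv
  | succ j hj ih =>
    intro hjn
    have hjn' : j ≤ n := by omega
    have hprev := ih hjn'
    have hWj : 0 < W l m (gamN n α j) :=
      W_pos l m hm hml (gam_nonneg n α h0 j hj) (gam_lt_one n α h0 hsum j hj)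
    have hWj1 : 0 < W l m (gamN n α (j+1)) :=
      W_pos l m hm hml (gam_nonneg n α h0 (j+1) (by omega)) (gam_lt_one n α h0 hsum (j+1) (by omega))
    have hrec := hLrec j (Finset.mem_Icc.2 ⟨hj, hjn'⟩)
    have hu : 0 < (f j (L (j-1)) - c) * W l m (gamN n α j) := mul_pos (by linarith) hWj
    rw [← hrec] at hu
    have hfj : c < f j (L j) := by nlinarith
    have := hford j (Finset.mem_Icc.2 ⟨hj, hjn'⟩) (j+1) (Finset.mem_Icc.2 ⟨by omega, hjn⟩)
      (by omega) (L j)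
    simpa using lt_trans hfj this

lemma core (l m n : ℕ) (hm : 1 ≤ m) (hml : m ≤ l - 1)
    (c v : ℝ) (f : ℕ → ℝ → ℝ)
    (hfm : ∀ j ∈ Finset.Icc 1 n, StrictMono (f j))
    (hford : ∀ i ∈ Finset.Icc 1 n, ∀ j ∈ Finset.Icc 1 n, i < j → ∀ x : ℝ, f i x < f j x)
    (hfv : c < f 1 v)
    (hassum : ∀ i ∈ Finset.Icc 1 n, ∀ j ∈ Finset.Icc 1 n, i < j →
      ∀ x y : ℝ, y < x → c < f i y →
        (f i y - c) / (f j y - c) < (f i x - c) / (f j x - c))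
    (αs αr : ℕ → ℝ)
    (hαs0 : ∀ j ∈ Finset.Icc 1 n, 0 ≤ αs j) (hαssum : ∑ j ∈ Finset.Icc 1 n, αs j < 1)
    (hαr0 : ∀ j ∈ Finset.Icc 1 n, 0 ≤ αr j) (hαrsum : ∑ j ∈ Finset.Icc 1 n, αr j < 1)
    (Ls Lr : ℕ → ℝ) (hLs0 : Ls 0 = v) (hLr0 : Lr 0 = v)
    (hLsrec : ∀ i ∈ Finset.Icc 1 n,
      (f i (Ls i) - c) * W l m (gamN n αs (i + 1)) =
        (f i (Ls (i - 1)) - c) * W l m (gamN n αs i))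
    (hLrrec : ∀ i ∈ Finset.Icc 1 n,
      (f i (Lr i) - c) * W l m (gamN n αr (i + 1)) =
        (f i (Lr (i - 1)) - c) * W l m (gamN n αr i))
    (i : ℕ) (hi1 : 1 ≤ i) (hin : i + 1 ≤ n)
    (hu : payoff l m n c f αr Lr i ≤ payoff l m n c f αs Ls i)
    (hγ : gamN n αs (i+1) < gamN n αr (i+1)) :
    payoff l m n c f αr Lr (i + 1) < payoff l m n c f αs Ls (i + 1) := by
  have hiIcc : i ∈ Finset.Icc 1 n := Finset.mem_Icc.2 ⟨hi1, by omega⟩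
  have hi1Icc : i + 1 ∈ Finset.Icc 1 n := Finset.mem_Icc.2 ⟨by omega, hin⟩
  -- positivity of payoffs at i
  have hcs : c < f i (Ls (i-1)) :=
    key_pos l m n hm hml c v f hford hfv αs hαs0 hαssum Ls hLs0 hLsrec i hi1 (by omega)
  have hcr : c < f i (Lr (i-1)) :=
    key_pos l m n hm hml c v f hford hfv αr hαr0 hαrsum Lr hLr0 hLrrec i hi1 (by omega)
  have hWs : 0 < W l m (gamN n αs i) :=
    W_pos l m hm hml (gam_nonneg n αs hαs0 i hi1) (gam_lt_one n αs hαs0 hαssum i hi1)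
  have hWr : 0 < W l m (gamN n αr i) :=
    W_pos l m hm hml (gam_nonneg n αr hαr0 i hi1) (gam_lt_one n αr hαr0 hαrsum i hi1)
  have hWs1 : 0 < W l m (gamN n αs (i+1)) :=
    W_pos l m hm hml (gam_nonneg n αs hαs0 (i+1) (by omega))
      (gam_lt_one n αs hαs0 hαssum (i+1) (by omega))
  have hWr1 : 0 < W l m (gamN n αr (i+1)) :=
    W_pos l m hm hml (gam_nonneg n αr hαr0 (i+1) (by omega))
      (gam_lt_one n αr hαr0 hαrsum (i+1) (by omega))
  -- W comparison at i+1
  have hWcomp : W l m (gamN n αr (i+1)) < W l m (gamN n αs (i+1)) :=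
    W_lt_W l m hm hml (gam_nonneg n αs hαs0 (i+1) (by omega)) hγ
      (gam_lt_one n αr hαr0 hαrsum (i+1) (by omega))
  have hus : 0 < payoff l m n c f αs Ls i := mul_pos (by linarith) hWs
  have hur : 0 < payoff l m n c f αr Lr i := mul_pos (by linarith) hWr
  have hrecs := hLsrec i hiIcc
  have hrecr := hLrrec i hiIcc
  -- t_a := f i (L_a i) - c > 0
  have hts : 0 < f i (Ls i) - c := by
    have : 0 < (f i (Ls i) - c) * W l m (gamN n αs (i+1)) := by
      rw [hrecs]; exact hus
    nlinarith
  have htr : 0 < f i (Lr i) - c := by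
    have : 0 < (f i (Lr i) - c) * W l m (gamN n αr (i+1)) := by
      rw [hrecr]; exact hur
    nlinarith
  -- q_a := f (i+1) (L_a i) - c > 0
  have hqs : 0 < f (i+1) (Ls i) - c := by
    have := hford i hiIcc (i+1) hi1Icc (by omega) (Ls i); linarith
  have hqr : 0 < f (i+1) (Lr i) - c := by
    have := hford i hiIcc (i+1) hi1Icc (by omega) (Lr i); linarith
  have hgoal : payoff l m n c f αs Ls (i+1)
      = (f (i+1) (Ls i) - c) * W l m (gamN n αs (i+1)) := by
    simp [payoff]
  have hgoalr : payoff l m n c f αr Lr (i+1)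
      = (f (i+1) (Lr i) - c) * W l m (gamN n αr (i+1)) := by
    simp [payoff]
  rw [hgoal, hgoalr]
  rcases le_or_gt (Lr i) (Ls i) with hL | hL
  · have hmono : f (i+1) (Lr i) ≤ f (i+1) (Ls i) := (hfm (i+1) hi1Icc).monotone hL
    nlinarith
  · have hratio := hassum i hiIcc (i+1) hi1Icc (by omega) (Lr i) (Ls i) hL (by linarith)
    have hcross : (f i (Ls i) - c) * (f (i+1) (Lr i) - c)
        < (f i (Lr i) - c) * (f (i+1) (Ls i) - c) :=
      (div_lt_div_iff₀ hqs hqr).1 hratio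
    -- u_a = t_a * W1_a
    have hus' : (f i (Ls i) - c) * W l m (gamN n αs (i+1)) = payoff l m n c f αs Ls i := by
      rw [hrecs]; rfl
    have hur' : (f i (Lr i) - c) * W l m (gamN n αr (i+1)) = payoff l m n c f αr Lr i := by
      rw [hrecr]; rfl
    set ts := f i (Ls i) - c
    set tr := f i (Lr i) - c
    set qs := f (i+1) (Ls i) - c
    set qr := f (i+1) (Lr i) - c
    set Ws1 := W l m (gamN n αs (i+1))
    set Wr1 := W l m (gamN n αr (i+1))
    set us := payoff l m n c f αs Ls i
    set ur := payoff l m n c f αr Lr i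
    have h1 : qr * Wr1 * (ts * tr) = qr * ts * ur := by
      rw [← hur']; ring
    have h2 : qs * Ws1 * (ts * tr) = qs * tr * us := by
      rw [← hus']; ring
    have h3 : qr * ts * ur < qs * tr * us := by
      nlinarith [mul_lt_mul_of_pos_right hcross hur,
        mul_le_mul_of_nonneg_left hu (mul_pos htr hqs).le]
    have h4 : qr * Wr1 * (ts * tr) < qs * Ws1 * (ts * tr) := by rw [h1, h2]; exact h3
    have h5 : 0 < ts * tr := mul_pos hts htr
    exact lt_of_mul_lt_mul_right h4 h5.le

theorem stmt13 (l m n : ℕ) (hm : 1 ≤ m) (hml : m ≤ l - 1) (hn : 1 ≤ n)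
    (c v : ℝ) (f : ℕ → ℝ → ℝ)
    (hfc : ∀ j ∈ Finset.Icc 1 n, Continuous (f j))
    (hfm : ∀ j ∈ Finset.Icc 1 n, StrictMono (f j))
    (hfb : ∀ j ∈ Finset.Icc 1 n, Function.Bijective (f j))
    (hford : ∀ i ∈ Finset.Icc 1 n, ∀ j ∈ Finset.Icc 1 n, i < j → ∀ x : ℝ, f i x < f j x)
    (hfv : c < f 1 v)
    (hassum : ∀ i ∈ Finset.Icc 1 n, ∀ j ∈ Finset.Icc 1 n, i < j →
      ∀ x y : ℝ, y < x → c < f i y →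
        (f i y - c) / (f j y - c) < (f i x - c) / (f j x - c))
    (αs αr : ℕ → ℝ)
    (hαs0 : ∀ j ∈ Finset.Icc 1 n, 0 ≤ αs j) (hαssum : ∑ j ∈ Finset.Icc 1 n, αs j < 1)
    (hαr0 : ∀ j ∈ Finset.Icc 1 n, 0 ≤ αr j) (hαrsum : ∑ j ∈ Finset.Icc 1 n, αr j < 1)
    (Ls Lr : ℕ → ℝ) (hLs0 : Ls 0 = v) (hLr0 : Lr 0 = v)
    (hLsrec : ∀ i ∈ Finset.Icc 1 n,
      (f i (Ls i) - c) * W l m (gamN n αs (i + 1)) =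
        (f i (Ls (i - 1)) - c) * W l m (gamN n αs i))
    (hLrrec : ∀ i ∈ Finset.Icc 1 n,
      (f i (Lr i) - c) * W l m (gamN n αr (i + 1)) =
        (f i (Lr (i - 1)) - c) * W l m (gamN n αr i))
    (i : ℕ) (hi1 : 1 ≤ i) (hin : i + 1 ≤ n) :
    ((payoff l m n c f αr Lr i ≤ payoff l m n c f αs Ls i →
      gamN n αs i ≤ gamN n αr i → αr i < αs i →
      payoff l m n c f αr Lr (i + 1) < payoff l m n c f αs Ls (i + 1)) ∧
    (payoff l m n c f αr Lr i ≤ payoff l m n c f αs Ls i →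
      gamN n αs i < gamN n αr i → αr i ≤ αs i →
      payoff l m n c f αr Lr (i + 1) < payoff l m n c f αs Ls (i + 1))) := by
  have hsS := gam_succ n αs i (by omega)
  have hsR := gam_succ n αr i (by omega)
  constructor
  · intro hu hg ha
    exact core l m n hm hml c v f hfm hford hfv hassum αs αr hαs0 hαssum hαr0 hαrsum
      Ls Lr hLs0 hLr0 hLsrec hLrrec i hi1 hin hu (by linarith)
  · intro hu hg ha
    exact core l m n hm hml c v f hfm hford hfv hassum αs αr hαs0 hαssum hαr0 hαrsum
      Ls Lr hLs0 hLr0 hLsrec hLrrec i hi1 hin hu (by linarith)
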